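/- Let d ≥ 1 be an integer and let 0 < r ≤ R. There exists a constant C > 0, depending only on d, r and R, such that for every probability measure μ on ℝ^d whose support is contained in a closed Euclidean ball of radius R, one has ∫ 1/μ(B(x,r)) μ(dx) ≤ C, where B(x,r) denotes the closed Euclidean ball centered at x of radius r. -/

import Mathlib

open MeasureTheory Metric ENNReal

/-- **Lemma 6.4 (Devroye–Györfi–Lugosi, Lemma 10.2).** For `0 < r ≤ R` there is a constant
`C > 0`, depending only on `d`, `r` and `R`, such that every Borel probability measure `μ`
on `ℝ^d` whose support is contained in a closed Euclidean ball of radius `R` (i.e. some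
closed ball of radius `R` has full measure) satisfies `∫ 1/μ(B(x,r)) μ(dx) ≤ C`. -/
theorem statement9 (d : ℕ) (hd : 1 ≤ d) (r R : ℝ) (hr : 0 < r) (hrR : r ≤ R) :
    ∃ C : ℝ, 0 < C ∧ ∀ μ : Measure (EuclideanSpace ℝ (Fin d)), IsProbabilityMeasure μ →
      (∃ x₀, μ (Metric.closedBall x₀ R) = 1) →
      ∫⁻ x, (μ (Metric.closedBall x r))⁻¹ ∂μ ≤ ENNReal.ofReal C := by
  obtain ⟨t, ht⟩ := (isCompact_closedBall (0 : EuclideanSpace ℝ (Fin d)) R).elim_finite_subcover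
    (fun y => ball y (r/2)) (fun y => isOpen_ball)
    (fun x _ => Set.mem_iUnion.2 ⟨x, mem_ball_self (by linarith)⟩)
  refine ⟨t.card + 1, by positivity, fun μ hμ ⟨x₀, hx₀⟩ => ?_⟩
  have hae : ∀ᵐ x ∂μ, x ∈ closedBall x₀ R := by
    rw [ae_iff]
    exact (prob_compl_eq_zero_iff measurableSet_closedBall).2 hx₀
  calc ∫⁻ x, (μ (closedBall x r))⁻¹ ∂μ
      ≤ ∫⁻ x, ∑ y ∈ t, (ball (x₀+y) (r/2)).indicator
          (fun _ => (μ (ball (x₀+y) (r/2)))⁻¹) x ∂μ := by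
        apply lintegral_mono_ae
        filter_upwards [hae] with x hx
        have hx0 : x - x₀ ∈ closedBall (0 : EuclideanSpace ℝ (Fin d)) R := by
          rw [mem_closedBall_zero_iff]
          rwa [mem_closedBall, dist_eq_norm] at hx
        obtain ⟨y, hy, hxy⟩ := Set.mem_iUnion₂.1 (ht hx0)
        have hxball : x ∈ ball (x₀ + y) (r/2) := by
          rw [mem_ball, dist_eq_norm] at hxy ⊢
          have : x - (x₀ + y) = x - x₀ - y := by abel
          rwa [this]
        have hsub : ball (x₀+y) (r/2) ⊆ closedBall x r := by
          intro z hz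
          rw [mem_ball] at hz hxball
          rw [mem_closedBall]
          have h1 := dist_triangle z (x₀+y) x
          have h2 : dist (x₀+y) x = dist x (x₀+y) := dist_comm _ _
          linarith
        have h1 : (μ (closedBall x r))⁻¹ ≤ (μ (ball (x₀+y) (r/2)))⁻¹ :=
          ENNReal.inv_le_inv' (measure_mono hsub)
        refine le_trans ?_ (Finset.single_le_sum (f := fun y =>
          (ball (x₀+y) (r/2)).indicator (fun _ => (μ (ball (x₀+y) (r/2)))⁻¹) x)
          (fun _ _ => zero_le) hy)
        simpa [Set.indicator_of_mem hxball] using h1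
    _ = ∑ y ∈ t, (μ (ball (x₀+y) (r/2)))⁻¹ * μ (ball (x₀+y) (r/2)) := by
        rw [lintegral_finset_sum _ (fun y _ =>
          (measurable_const.indicator measurableSet_ball))]
        refine Finset.sum_congr rfl fun y _ => ?_
        rw [lintegral_indicator measurableSet_ball, setLIntegral_const]
    _ ≤ ∑ y ∈ t, 1 := by
        refine Finset.sum_le_sum fun y _ => ?_
        rcases eq_or_ne (μ (ball (x₀+y) (r/2))) 0 with h | h
        · simp [h]
        · rw [ENNReal.inv_mul_cancel h (measure_ne_top μ _)]
    _ = (t.card : ℝ≥0∞) := by simp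
    _ ≤ ENNReal.ofReal (t.card + 1) := by
        rw [ENNReal.ofReal_add (by positivity) zero_le_one, ENNReal.ofReal_natCast]
        exact le_self_add
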